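/- arXiv:1708.00721 — 2 statements merged into one kernel-verified Lean document; each statement's English description precedes it below -/
import Mathlib

section
/- Let p, q, r be positive integers with p prime and p ≤ q ≤ r, and let Ω be a finite set with |Ω| = deg > 6. Assume that p does not divide qr and p does not divide deg. Suppose there is a surjective group homomorphism π : Δ(p,q,r) → Alt(Ω) ≤ Sym(Ω) admitting, for some integer k > 0, a k-handle [a,b] with a ≠ b and with k strictly smaller than the size of the orbit of a under ⟨π(x)π(y)⟩. Then Δ(p,q,r) also has a quotient isomorphic to the semidirect product W ⋊ Alt(Ω), where W = {v : Ω → ℤ/pℤ ∣ Σ_{ω∈Ω} v(ω) = 0} and Alt(Ω) acts on W by permuting coordinates. -/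
open Equiv
open SemidirectProduct

def triRels (p q r : ℕ) : Set (FreeGroup (Fin 2)) :=
  {FreeGroup.of 0 ^ p, FreeGroup.of 1 ^ q, (FreeGroup.of 0 * FreeGroup.of 1) ^ r}

/-- The triangle group `Δ(p,q,r) = ⟨x, y ∣ x^p = y^q = (xy)^r = 1⟩`. -/
abbrev Tri (p q r : ℕ) := PresentedGroup (triRels p q r)

/-- The generator `x` of the triangle group. -/
def gx (p q r : ℕ) : Tri p q r := PresentedGroup.of 0

/-- The generator `y` of the triangle group. -/
def gy (p q r : ℕ) : Tri p q r := PresentedGroup.of 1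

/-- The "sum of coordinates" homomorphism on `(ℤ/pℤ)^Ω` (written multiplicatively). -/
def sumHom (p : ℕ) (Ω : Type) [Fintype Ω] :
    (Ω → Multiplicative (ZMod p)) →* Multiplicative (ZMod p) where
  toFun v := ∏ ω, v ω
  map_one' := by simp
  map_mul' v w := by simp [Finset.prod_mul_distrib]

/-- `W = {v : Ω → ℤ/pℤ ∣ Σ_ω v(ω) = 0}`, written multiplicatively. -/
def Wsub (p : ℕ) (Ω : Type) [Fintype Ω] : Subgroup (Ω → Multiplicative (ZMod p)) :=
  (sumHom p Ω).ker

/-- A permutation of `Ω` acts on `W` by permuting coordinates. -/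
def WAut (p : ℕ) (Ω : Type) [Fintype Ω] : Equiv.Perm Ω →* MulAut (Wsub p Ω) where
  toFun σ :=
    { toFun := fun v => ⟨v.1 ∘ σ.symm, by
        have hv := v.2
        simp only [Wsub, sumHom, MonoidHom.mem_ker, MonoidHom.coe_mk, OneHom.coe_mk] at hv ⊢
        rw [← hv]
        exact Equiv.prod_comp σ.symm v.1⟩
      invFun := fun v => ⟨v.1 ∘ σ, by
        have hv := v.2
        simp only [Wsub, sumHom, MonoidHom.mem_ker, MonoidHom.coe_mk, OneHom.coe_mk] at hv ⊢
        rw [← hv]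
        exact Equiv.prod_comp σ v.1⟩
      left_inv := fun v => by
        apply Subtype.ext; funext ω; simp
      right_inv := fun v => by
        apply Subtype.ext; funext ω; simp
      map_mul' := fun v w => rfl }
  map_one' := by
    apply MulEquiv.ext; intro v; apply Subtype.ext; rfl
  map_mul' σ τ := by
    apply MulEquiv.ext; intro v; apply Subtype.ext; rfl

/-- The action of `Alt(Ω)` on `W` by permuting coordinates. -/
def altActW (p : ℕ) (Ω : Type) [Fintype Ω] [DecidableEq Ω] :
    alternatingGroup Ω →* MulAut (Wsub p Ω) :=
  (WAut p Ω).comp (alternatingGroup Ω).subtype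


private lemma tg_sdp_pow_right {N G : Type*} [Group N] [Group G] {φ : G →* MulAut N}
    (g : N ⋊[φ] G) (n : ℕ) : (g ^ n).right = g.right ^ n := by
  rw [← SemidirectProduct.rightHom_eq_right, map_pow, SemidirectProduct.rightHom_eq_right]

private lemma tg_sdp_pow_left {N G : Type*} [CommGroup N] [Group G] {φ : G →* MulAut N}
    (g : N ⋊[φ] G) (n : ℕ) :
    (g ^ n).left = ∏ i ∈ Finset.range n, φ (g.right ^ i) g.left := by
  induction n with
  | zero => simp
  | succ n ih =>
    rw [pow_succ, SemidirectProduct.mul_left, ih, Finset.prod_range_succ, tg_sdp_pow_right]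

private lemma tg_sum_shift {M : Type*} [AddCommGroup M] (r : ℕ) :
    ∀ (k : ℕ) (g : ℕ → M), (∀ i, g (i + r) = g i) →
      (∑ i ∈ Finset.range r, g (i + k)) = ∑ i ∈ Finset.range r, g i := by
  intro k
  induction k with
  | zero => intro g hg; simp
  | succ k ih =>
    intro g hg
    have h1 : (∑ i ∈ Finset.range r, g (i + (k + 1)))
        = ∑ i ∈ Finset.range r, (fun j => g (j + 1)) (i + k) := by
      refine Finset.sum_congr rfl fun i _ => ?_
      show g (i + (k+1)) = g (i + k + 1)
      rfl
    rw [h1, ih (fun j => g (j + 1)) (fun i => by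
      show g (i + r + 1) = g (i + 1)
      rw [show i + r + 1 = (i + 1) + r by omega, hg])]
    have h2 := Finset.sum_range_succ' g r
    have h3 := Finset.sum_range_succ g r
    have h4 : g r = g 0 := by have := hg 0; rwa [zero_add] at this
    have h5 : (∑ i ∈ Finset.range r, g (i + 1)) + g 0
        = (∑ i ∈ Finset.range r, g i) + g 0 := by rw [← h2, h3, h4]
    exact add_right_cancel h5

private def tgDvec (p : ℕ) (Ω : Type) [DecidableEq Ω] (c : ZMod p) (α β : Ω) :
    Ω → Multiplicative (ZMod p) :=
  fun ω => Multiplicative.ofAdd (if ω = α then c else if ω = β then -c else 0)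

private lemma tgDvec_mem (p : ℕ) (Ω : Type) [Fintype Ω] [DecidableEq Ω] (c : ZMod p)
    {α β : Ω} (hab : α ≠ β) : tgDvec p Ω c α β ∈ Wsub p Ω := by
  have hsplit : ∀ ω, (if ω = α then c else if ω = β then -c else 0)
      = (if ω = α then c else 0) + (if ω = β then -c else 0) := by
    intro ω
    by_cases h1 : ω = α
    · subst h1; simp [hab]
    · by_cases h2 : ω = β
      · subst h2; simp [h1, Ne.symm hab]
      · simp [h1, h2]
  show sumHom p Ω (tgDvec p Ω c α β) = 1
  show (∏ ω, tgDvec p Ω c α β ω) = 1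
  unfold tgDvec
  rw [← ofAdd_sum]
  have : (∑ ω, (if ω = α then c else if ω = β then -c else 0)) = 0 := by
    rw [Finset.sum_congr rfl (fun ω _ => hsplit ω), Finset.sum_add_distrib,
      Finset.sum_ite_eq' Finset.univ α (fun _ => c),
      Finset.sum_ite_eq' Finset.univ β (fun _ => -c)]
    simp
  rw [this]; rfl

private lemma tgWAut_apply {p : ℕ} {Ω : Type} [Fintype Ω] [DecidableEq Ω] (σ : Equiv.Perm Ω)
    (v : Wsub p Ω) (ω : Ω) : ((WAut p Ω σ v : Wsub p Ω) : Ω → Multiplicative (ZMod p)) ω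
      = (v : Ω → Multiplicative (ZMod p)) (σ.symm ω) := rfl

private lemma tgWAut_dvec {p : ℕ} {Ω : Type} [Fintype Ω] [DecidableEq Ω] (σ : Equiv.Perm Ω)
    (c : ZMod p) {α β : Ω} (hab : α ≠ β) :
    ((WAut p Ω σ ⟨tgDvec p Ω c α β, tgDvec_mem p Ω c hab⟩ : Wsub p Ω)
      : Ω → Multiplicative (ZMod p)) = tgDvec p Ω c (σ α) (σ β) := by
  funext ω
  rw [tgWAut_apply]
  show Multiplicative.ofAdd _ = Multiplicative.ofAdd _
  simp only [tgDvec, Equiv.symm_apply_eq]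

private lemma tg_exists_map (Ω : Type) [DecidableEq Ω] {A B α β : Ω}
    (hAB : A ≠ B) (hαβ : α ≠ β) : ∃ g : Equiv.Perm Ω, g A = α ∧ g B = β := by
  by_cases h : (Equiv.swap A α) B = β
  · exact ⟨Equiv.swap A α, Equiv.swap_apply_left A α, h⟩
  · refine ⟨Equiv.swap ((Equiv.swap A α) B) β * (Equiv.swap A α), ?_, ?_⟩
    · have h1 : (Equiv.swap A α) B ≠ α := by
        intro hc
        exact hAB ((Equiv.swap A α).injective (by rw [hc, Equiv.swap_apply_left]))
      rw [Equiv.Perm.mul_apply, Equiv.swap_apply_left]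
      exact Equiv.swap_apply_of_ne_of_ne (Ne.symm h1) hαβ
    · rw [Equiv.Perm.mul_apply, Equiv.swap_apply_left]

private lemma tg_exists_alt {Ω : Type} [Fintype Ω] [DecidableEq Ω] (h7 : 6 < Fintype.card Ω)
    {A B α β : Ω} (hAB : A ≠ B) (hαβ : α ≠ β) :
    ∃ σ : Equiv.Perm Ω, σ ∈ alternatingGroup Ω ∧ σ A = α ∧ σ B = β := by
  obtain ⟨g, hgA, hgB⟩ := tg_exists_map Ω hAB hαβ
  rcases Int.units_eq_one_or (Equiv.Perm.sign g) with hs | hs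
  · exact ⟨g, Equiv.Perm.mem_alternatingGroup.2 hs, hgA, hgB⟩
  · have hcard : 1 < (Finset.univ \ {α, β} : Finset Ω).card := by
      have h1 : (Finset.univ \ {α, β} : Finset Ω).card
          ≥ Fintype.card Ω - ({α, β} : Finset Ω).card := Finset.le_card_sdiff _ _
      have h2 : ({α, β} : Finset Ω).card ≤ 2 := Finset.card_insert_le _ _ |>.trans (by simp)
      omega
    obtain ⟨c, hc, d, hd, hcd⟩ := Finset.one_lt_card.mp hcard
    simp only [Finset.mem_sdiff, Finset.mem_insert, Finset.mem_singleton, not_or] at hc hd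
    refine ⟨Equiv.swap c d * g, ?_, ?_, ?_⟩
    · rw [Equiv.Perm.mem_alternatingGroup, map_mul, Equiv.Perm.sign_swap hcd, hs]
      decide
    · rw [Equiv.Perm.mul_apply, hgA]
      exact Equiv.swap_apply_of_ne_of_ne (fun h => hc.2.1 h.symm) (fun h => hd.2.1 h.symm)
    · rw [Equiv.Perm.mul_apply, hgB]
      exact Equiv.swap_apply_of_ne_of_ne (fun h => hc.2.2 h.symm) (fun h => hd.2.2 h.symm)

private lemma tg_pow_fix {Ω : Type} (σ : Equiv.Perm Ω) {z : Ω} (h : σ z = z) (n : ℕ) :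
    (σ ^ n) z = z := by
  induction n with
  | zero => rfl
  | succ n ih => rw [pow_succ, Equiv.Perm.mul_apply, h, ih]

private lemma tg_mult_pow_p (p : ℕ) (m : Multiplicative (ZMod p)) : m ^ p = 1 := by
  rw [← ofAdd_toAdd m, ← ofAdd_nsmul, nsmul_eq_mul, ZMod.natCast_self, zero_mul, ofAdd_zero]
theorem quotient_Cp_powers_semidirect_alternating
    (p q r k : ℕ) (hp : p.Prime) (hpq : p ≤ q) (hqr : q ≤ r) (hk : 0 < k)
    (Ω : Type) [Fintype Ω] [DecidableEq Ω]
    (hdeg : 6 < Fintype.card Ω)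
    (hpqr : ¬ p ∣ q * r) (hpdeg : ¬ p ∣ Fintype.card Ω)
    (π : Tri p q r →* Equiv.Perm Ω)
    (hrange : π.range = alternatingGroup Ω)
    (a b : Ω) (hab : a ≠ b)
    (hax : π (gx p q r) a = a) (hbx : π (gx p q r) b = b)
    (hhandle : ((π (gx p q r * gy p q r)) ^ k) a = b)
    (hks : k < Nat.card {w : Ω | ∃ n : ℤ, ((π (gx p q r * gy p q r)) ^ n) a = w}) :
    ∃ f : Tri p q r →* (Wsub p Ω) ⋊[altActW p Ω] alternatingGroup Ω,
      Function.Surjective f := by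
  haveI hfact : Fact p.Prime := ⟨hp⟩
  haveI : NeZero p := ⟨hp.ne_zero⟩
  -- basic relations in the triangle group
  have hrel : ∀ w ∈ triRels p q r, PresentedGroup.mk (triRels p q r) w = 1 := fun w hw =>
    (QuotientGroup.eq_one_iff w).mpr (Subgroup.subset_normalClosure hw)
  have hgxp : (gx p q r) ^ p = 1 := by
    have h := hrel _ (show FreeGroup.of 0 ^ p ∈ triRels p q r from Set.mem_insert _ _)
    rwa [map_pow] at h
  have hgyq : (gy p q r) ^ q = 1 := by
    have h := hrel _ (show FreeGroup.of 1 ^ q ∈ triRels p q r from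
      Set.mem_insert_of_mem _ (Set.mem_insert _ _))
    rwa [map_pow] at h
  have hgxyr : (gx p q r * gy p q r) ^ r = 1 := by
    have h := hrel _ (show (FreeGroup.of 0 * FreeGroup.of 1) ^ r ∈ triRels p q r from
      Set.mem_insert_of_mem _ (Set.mem_insert_of_mem _ rfl))
    rwa [map_pow, map_mul] at h
  -- the permutations
  set xh : Equiv.Perm Ω := π (gx p q r) with hxh
  set yh : Equiv.Perm Ω := π (gy p q r) with hyh
  set th : Equiv.Perm Ω := π (gx p q r * gy p q r) with hth
  have hmemrange : ∀ g : Tri p q r, π g ∈ alternatingGroup Ω := fun g => by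
    rw [← hrange]; exact ⟨g, rfl⟩
  have hxhp : xh ^ p = 1 := by rw [hxh, ← map_pow, hgxp, map_one]
  have hyhq : yh ^ q = 1 := by rw [hyh, ← map_pow, hgyq, map_one]
  have hthr : th ^ r = 1 := by rw [hth, ← map_pow, hgxyr, map_one]
  set Xc : alternatingGroup Ω := ⟨xh, hmemrange _⟩ with hXc
  set Yc : alternatingGroup Ω := ⟨yh, hmemrange _⟩ with hYc
  set Tc : alternatingGroup Ω := ⟨th, hmemrange _⟩ with hTc
  have hXY : Xc * Yc = Tc := by
    apply Subtype.ext
    show xh * yh = th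
    rw [hxh, hyh, hth, map_mul]
  -- the distinguished element δ of W
  set dl : Wsub p Ω := ⟨tgDvec p Ω 1 a b, tgDvec_mem p Ω 1 hab⟩ with hdl
  -- δ is fixed by powers of xh
  have hdlfix : ∀ i : ℕ, (WAut p Ω (xh ^ i)) dl = dl := by
    intro i
    apply Subtype.ext
    rw [hdl, tgWAut_dvec (xh ^ i) 1 hab, tg_pow_fix xh hax i, tg_pow_fix xh hbx i]
  -- the two generator images
  set G := (Wsub p Ω) ⋊[altActW p Ω] alternatingGroup Ω with hG
  set E0 : G := ⟨dl, Xc⟩ with hE0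
  set E1 : G := ⟨(1 : Wsub p Ω), Yc⟩ with hE1
  set phi : Fin 2 → G := ![E0, E1] with hphi
  have hcoe_pow : ∀ (s : alternatingGroup Ω) (i : ℕ), ((s ^ i : alternatingGroup Ω) : Equiv.Perm Ω) = (s : Equiv.Perm Ω) ^ i :=
    fun s i => SubgroupClass.coe_pow s i
  have haltW : ∀ s : alternatingGroup Ω, altActW p Ω s = WAut p Ω (s : Equiv.Perm Ω) := fun s => rfl
  -- relation 1
  have hrel0 : E0 ^ p = 1 := by
    apply SemidirectProduct.ext
    · rw [tg_sdp_pow_left]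
      show (∏ i ∈ Finset.range p, (altActW p Ω (Xc ^ i)) dl) = 1
      have heach : ∀ i ∈ Finset.range p, (altActW p Ω (Xc ^ i)) dl = dl := by
        intro i _
        rw [haltW, hcoe_pow]
        exact hdlfix i
      rw [Finset.prod_congr rfl heach, Finset.prod_const, Finset.card_range]
      apply Subtype.ext
      show (dl : Ω → Multiplicative (ZMod p)) ^ p = 1
      funext ω
      rw [Pi.pow_apply, tg_mult_pow_p]
      rfl
    · rw [tg_sdp_pow_right]
      show Xc ^ p = 1
      apply Subtype.ext
      rw [hcoe_pow]
      exact hxhp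
  -- relation 2
  have hrel1 : E1 ^ q = 1 := by
    apply SemidirectProduct.ext
    · rw [tg_sdp_pow_left]
      show (∏ i ∈ Finset.range q, (altActW p Ω (Yc ^ i)) 1) = 1
      simp
    · rw [tg_sdp_pow_right]
      show Yc ^ q = 1
      apply Subtype.ext
      rw [hcoe_pow]
      exact hyhq
  -- relation 3
  have hE01 : E0 * E1 = (⟨dl, Tc⟩ : G) := by
    apply SemidirectProduct.ext
    · show dl * (altActW p Ω Xc) 1 = dl
      rw [map_one, mul_one]
    · show Xc * Yc = Tc
      exact hXY
  have hrel2 : (E0 * E1) ^ r = 1 := by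
    rw [hE01]
    apply SemidirectProduct.ext
    · rw [tg_sdp_pow_left]
      show (∏ i ∈ Finset.range r, (altActW p Ω (Tc ^ i)) dl) = 1
      apply Subtype.ext
      rw [SubmonoidClass.coe_finset_prod]
      show (∏ i ∈ Finset.range r, ((altActW p Ω (Tc ^ i)) dl : Ω → Multiplicative (ZMod p))) = 1
      funext ω
      rw [Finset.prod_apply]
      -- pointwise analysis
      have hb : (th ^ k) a = b := hhandle
      have hdistinct : ∀ i : ℕ, (th ^ i) a ≠ (th ^ (i + k)) a := by
        intro i hcontra
        apply hab
        have hsplit : (th ^ (i + k)) a = (th ^ i) ((th ^ k) a) := by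
          rw [pow_add, Equiv.Perm.mul_apply]
        have h2 : a = (th ^ k) a := (th ^ i).injective (by rw [hcontra, hsplit])
        rw [← hb]
        exact h2
      set gfun : ℕ → ZMod p := fun i => if ω = (th ^ i) a then 1 else 0 with hgfun
      have hfactor : ∀ i ∈ Finset.range r,
          ((altActW p Ω (Tc ^ i)) dl : Ω → Multiplicative (ZMod p)) ω
            = Multiplicative.ofAdd (gfun i - gfun (i + k)) := by
        intro i _
        rw [haltW, hcoe_pow]
        show ((WAut p Ω (th ^ i)) dl : Ω → Multiplicative (ZMod p)) ω = _
        rw [hdl, tgWAut_dvec (th ^ i) 1 hab]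
        have hbth : (th ^ i) b = (th ^ (i + k)) a := by
          rw [← hb, pow_add, Equiv.Perm.mul_apply]
        show Multiplicative.ofAdd _ = Multiplicative.ofAdd _
        congr 1
        rw [hbth, hgfun]
        by_cases h1 : ω = (th ^ i) a
        · simp only [h1, if_pos rfl, if_neg (hdistinct i), sub_zero]
        · by_cases h2 : ω = (th ^ (i + k)) a
          · simp only [if_neg h1, if_pos h2, zero_sub]
          · simp only [if_neg h1, if_neg h2, sub_zero]
      rw [Finset.prod_congr rfl hfactor, ← ofAdd_sum, Finset.sum_sub_distrib]
      have hper : ∀ i, gfun (i + r) = gfun i := by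
        intro i
        rw [hgfun]
        have : th ^ (i + r) = th ^ i := by rw [pow_add, hthr, mul_one]
        simp only [this]
      rw [tg_sum_shift r k gfun hper, sub_self, ofAdd_zero]
      rfl
    · rw [tg_sdp_pow_right]
      show Tc ^ r = 1
      apply Subtype.ext
      rw [hcoe_pow]
      exact hthr
  -- the homomorphism
  have hlift : ∀ w ∈ triRels p q r, FreeGroup.lift phi w = 1 := by
    intro w hw
    simp only [triRels, Set.mem_insert_iff, Set.mem_singleton_iff] at hw
    rcases hw with rfl | rfl | rfl
    · rw [map_pow, FreeGroup.lift_apply_of]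
      show E0 ^ p = 1
      exact hrel0
    · rw [map_pow, FreeGroup.lift_apply_of]
      show E1 ^ q = 1
      exact hrel1
    · rw [map_pow, map_mul, FreeGroup.lift_apply_of, FreeGroup.lift_apply_of]
      show (E0 * E1) ^ r = 1
      exact hrel2
  refine ⟨PresentedGroup.toGroup hlift, ?_⟩
  set f : Tri p q r →* G := PresentedGroup.toGroup hlift with hf
  have hf0 : f (gx p q r) = E0 := PresentedGroup.toGroup.of hlift
  have hf1 : f (gy p q r) = E1 := PresentedGroup.toGroup.of hlift
  -- the restriction of π to the alternating group
  set pi0 : Tri p q r →* alternatingGroup Ω :=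
    MonoidHom.codRestrict π (alternatingGroup Ω) hmemrange with hpi0
  have hpi0surj : Function.Surjective pi0 := by
    intro s
    have hs : (s : Equiv.Perm Ω) ∈ π.range := by rw [hrange]; exact s.2
    obtain ⟨g, hg⟩ := hs
    exact ⟨g, Subtype.ext hg⟩
  have hcomp : ∀ g : Tri p q r, (f g).right = pi0 g := by
    have hhom : (SemidirectProduct.rightHom).comp f = pi0 := by
      apply PresentedGroup.ext
      intro x
      fin_cases x
      · show SemidirectProduct.rightHom (f (gx p q r)) = pi0 (gx p q r)
        rw [hf0]
        apply Subtype.ext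
        rfl
      · show SemidirectProduct.rightHom (f (gy p q r)) = pi0 (gy p q r)
        rw [hf1]
        apply Subtype.ext
        rfl
    intro g
    have := congrArg (fun h => h g) hhom
    simpa using this
  -- the subgroup M of W detected by the range of f
  set M : Subgroup (Wsub p Ω) := Subgroup.comap (SemidirectProduct.inl) f.range with hM
  -- finishing step, given that M is everything
  have hfinish : (∀ w : Wsub p Ω, w ∈ M) → Function.Surjective f := by
    intro hMall z
    obtain ⟨g0, hg0⟩ := hpi0surj z.right
    have hz1 : inl (z.left * (f g0).left⁻¹) ∈ f.range := hMall _
    obtain ⟨g1, hg1⟩ := hz1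
    refine ⟨g1 * g0, ?_⟩
    rw [map_mul, hg1]
    apply SemidirectProduct.ext
    · show (z.left * (f g0).left⁻¹) * (altActW p Ω 1) ((f g0).left) = z.left
      rw [map_one]
      show (z.left * (f g0).left⁻¹) * (f g0).left = z.left
      rw [mul_assoc, inv_mul_cancel, mul_one]
    · show 1 * (f g0).right = z.right
      rw [one_mul, hcomp, hg0]
  -- invariance of M under the alternating action
  have hMinv : ∀ (s : alternatingGroup Ω) (w : Wsub p Ω), w ∈ M → (altActW p Ω s) w ∈ M := by
    intro s w hw
    obtain ⟨gw, hgw⟩ := hw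
    obtain ⟨g, hg⟩ := hpi0surj s
    have hdecomp : f g = inl ((f g).left) * inr s := by
      rw [← hg, ← hcomp g]
      exact (SemidirectProduct.inl_left_mul_inr_right (f g)).symm
    show inl ((altActW p Ω s) w) ∈ f.range
    refine ⟨g * gw * g⁻¹, ?_⟩
    rw [map_mul, map_mul, map_inv, hgw, hdecomp]
    rw [mul_inv_rev, ← map_inv]
    calc inl (f g).left * inr s * inl w * (inr s⁻¹ * inl ((f g).left)⁻¹)
        = inl (f g).left * (inr s * inl w * inr s⁻¹) * inl ((f g).left)⁻¹ := by
          group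
      _ = inl (f g).left * inl ((altActW p Ω s) w) * inl ((f g).left)⁻¹ := by
          rw [← SemidirectProduct.inl_aut]
      _ = inl ((f g).left * (altActW p Ω s) w * ((f g).left)⁻¹) := by
          rw [map_mul, map_mul]
      _ = inl ((altActW p Ω s) w) := by
          rw [mul_comm ((f g).left) _, mul_assoc, mul_inv_cancel, mul_one]
  have hWsum : ∀ v : Wsub p Ω, (∑ ω, Multiplicative.toAdd ((v : Ω → Multiplicative (ZMod p)) ω)) = 0 := by
    intro v
    have h2 : (∏ ω, (v : Ω → Multiplicative (ZMod p)) ω) = 1 := v.2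
    have h3 := congrArg Multiplicative.toAdd h2
    rwa [toAdd_prod] at h3
  by_cases hMv : ∃ v : Wsub p Ω, v ∈ M ∧ v ≠ 1
  · apply hfinish
    obtain ⟨v, hvM, hv1⟩ := hMv
    -- v is non-constant
    have hnc : ∃ A B : Ω, (v : Ω → Multiplicative (ZMod p)) A ≠ (v : Ω → Multiplicative (ZMod p)) B := by
      by_contra hcon
      push_neg at hcon
      obtain ⟨ω0⟩ : Nonempty Ω := Fintype.card_pos_iff.mp (by omega)
      have hsum := hWsum v
      have hconst : ∀ ω : Ω, Multiplicative.toAdd ((v : Ω → Multiplicative (ZMod p)) ω)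
          = Multiplicative.toAdd ((v : Ω → Multiplicative (ZMod p)) ω0) := fun ω =>
        congrArg Multiplicative.toAdd (hcon ω ω0)
      rw [Finset.sum_congr rfl (fun ω _ => hconst ω), Finset.sum_const, Finset.card_univ,
        nsmul_eq_mul] at hsum
      have hcard0 : ((Fintype.card Ω : ZMod p)) ≠ 0 := by
        rw [Ne, ZMod.natCast_eq_zero_iff]
        exact hpdeg
      have hv0 : Multiplicative.toAdd ((v : Ω → Multiplicative (ZMod p)) ω0) = 0 := by
        rcases mul_eq_zero.mp hsum with h | h
        · exact absurd h hcard0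
        · exact h
      apply hv1
      apply Subtype.ext
      funext ω
      have := hconst ω
      rw [hv0] at this
      have : (v : Ω → Multiplicative (ZMod p)) ω = Multiplicative.ofAdd 0 := by
        rw [← this, ofAdd_toAdd]
      rw [this, ofAdd_zero]
      rfl
    obtain ⟨A, B, hvAB⟩ := hnc
    have hAB : A ≠ B := fun h => hvAB (by rw [h])
    -- choose C D distinct avoiding A B
    have hcardCD : 1 < (Finset.univ \ {A, B} : Finset Ω).card := by
      have h1 := Finset.le_card_sdiff ({A, B} : Finset Ω) Finset.univ
      have h2 : ({A, B} : Finset Ω).card ≤ 2 := Finset.card_insert_le _ _ |>.trans (by simp)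
      have h3 : (Finset.univ : Finset Ω).card = Fintype.card Ω := Finset.card_univ
      omega
    obtain ⟨C, hC, D, hD, hCD⟩ := Finset.one_lt_card.mp hcardCD
    simp only [Finset.mem_sdiff, Finset.mem_insert, Finset.mem_singleton, not_or] at hC hD
    set s1 : Equiv.Perm Ω := Equiv.swap A B * Equiv.swap C D with hs1
    have hs1alt : s1 ∈ alternatingGroup Ω := by
      rw [Equiv.Perm.mem_alternatingGroup, hs1, map_mul, Equiv.Perm.sign_swap hAB,
        Equiv.Perm.sign_swap hCD]
      decide
    set S1 : alternatingGroup Ω := ⟨s1, hs1alt⟩ with hS1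
    set u : Wsub p Ω := v * ((altActW p Ω S1) v)⁻¹ with hu
    have huM : u ∈ M := M.mul_mem hvM (M.inv_mem (hMinv S1 v hvM))
    have hs1inv : s1⁻¹ = Equiv.swap C D * Equiv.swap A B := by
      rw [hs1, mul_inv_rev, Equiv.swap_inv, Equiv.swap_inv]
    have huval : ∀ ω, (u : Ω → Multiplicative (ZMod p)) ω
        = (v : Ω → Multiplicative (ZMod p)) ω * ((v : Ω → Multiplicative (ZMod p)) (s1⁻¹ ω))⁻¹ := by
      intro ω
      rfl
    have huA : (u : Ω → Multiplicative (ZMod p)) A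
        = (v : Ω → Multiplicative (ZMod p)) A * ((v : Ω → Multiplicative (ZMod p)) B)⁻¹ := by
      rw [huval]
      have harg : s1⁻¹ A = B := by
        rw [hs1inv, Equiv.Perm.mul_apply, Equiv.swap_apply_left]
        exact Equiv.swap_apply_of_ne_of_ne (Ne.symm hC.2.2) (Ne.symm hD.2.2)
      rw [harg]
    have huA1 : (u : Ω → Multiplicative (ZMod p)) A ≠ 1 := by
      rw [huA, Ne, mul_inv_eq_one]
      exact hvAB
    have huz : ∀ z : Ω, z ≠ A → z ≠ B → z ≠ C → z ≠ D →
        (u : Ω → Multiplicative (ZMod p)) z = 1 := by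
      intro z h1 h2 h3 h4
      have harg : s1⁻¹ z = z := by
        rw [hs1inv, Equiv.Perm.mul_apply, Equiv.swap_apply_of_ne_of_ne h1 h2,
          Equiv.swap_apply_of_ne_of_ne h3 h4]
      rw [huval, harg, mul_inv_cancel]
    -- choose z1 z2 z3 distinct avoiding A B C D
    have hcardZ : 3 ≤ (Finset.univ \ {A, B, C, D} : Finset Ω).card := by
      have h1 := Finset.le_card_sdiff ({A, B, C, D} : Finset Ω) Finset.univ
      have h2 : ({A, B, C, D} : Finset Ω).card ≤ 4 := by
        refine (Finset.card_insert_le _ _).trans ?_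
        refine Nat.succ_le_succ ?_
        refine (Finset.card_insert_le _ _).trans ?_
        refine Nat.succ_le_succ ?_
        exact (Finset.card_insert_le _ _).trans (by simp)
      have h3 : (Finset.univ : Finset Ω).card = Fintype.card Ω := Finset.card_univ
      omega
    obtain ⟨t, hts, htc⟩ := Finset.exists_subset_card_eq hcardZ
    obtain ⟨z1, z2, z3, h12, h13, h23, rfl⟩ := Finset.card_eq_three.mp htc
    have hz1 : z1 ∈ Finset.univ \ {A, B, C, D} := hts (by simp)
    have hz2 : z2 ∈ Finset.univ \ {A, B, C, D} := hts (by simp)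
    have hz3 : z3 ∈ Finset.univ \ {A, B, C, D} := hts (by simp)
    simp only [Finset.mem_sdiff, Finset.mem_insert, Finset.mem_singleton, not_or] at hz1 hz2 hz3
    have hz1A : z1 ≠ A := hz1.2.1
    have hz2A : z2 ≠ A := hz2.2.1
    have hz3A : z3 ≠ A := hz3.2.1
    set s2 : Equiv.Perm Ω := Equiv.swap A z1 * Equiv.swap z2 z3 with hs2
    have hs2alt : s2 ∈ alternatingGroup Ω := by
      rw [Equiv.Perm.mem_alternatingGroup, hs2, map_mul, Equiv.Perm.sign_swap (Ne.symm hz1A),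
        Equiv.Perm.sign_swap h23]
      decide
    set S2 : alternatingGroup Ω := ⟨s2, hs2alt⟩ with hS2
    set m : Wsub p Ω := u * ((altActW p Ω S2) u)⁻¹ with hm
    have hmM : m ∈ M := M.mul_mem huM (M.inv_mem (hMinv S2 u huM))
    have hs2inv : s2⁻¹ = Equiv.swap z2 z3 * Equiv.swap A z1 := by
      rw [hs2, mul_inv_rev, Equiv.swap_inv, Equiv.swap_inv]
    have hmval : ∀ ω, (m : Ω → Multiplicative (ZMod p)) ω
        = (u : Ω → Multiplicative (ZMod p)) ω * ((u : Ω → Multiplicative (ZMod p)) (s2⁻¹ ω))⁻¹ :=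
      fun ω => rfl
    set cc : ZMod p := Multiplicative.toAdd ((u : Ω → Multiplicative (ZMod p)) A) with hcc
    have hcc0 : cc ≠ 0 := by
      rw [hcc, Ne]
      intro h
      apply huA1
      rw [← ofAdd_toAdd ((u : Ω → Multiplicative (ZMod p)) A), h, ofAdd_zero]
    have huz1 : (u : Ω → Multiplicative (ZMod p)) z1 = 1 :=
      huz z1 hz1.2.1 hz1.2.2.1 hz1.2.2.2.1 hz1.2.2.2.2
    have huz2 : (u : Ω → Multiplicative (ZMod p)) z2 = 1 :=
      huz z2 hz2.2.1 hz2.2.2.1 hz2.2.2.2.1 hz2.2.2.2.2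
    have huz3 : (u : Ω → Multiplicative (ZMod p)) z3 = 1 :=
      huz z3 hz3.2.1 hz3.2.2.1 hz3.2.2.2.1 hz3.2.2.2.2
    have hAz1 : A ≠ z1 := Ne.symm hz1A
    have hmdvec : m = ⟨tgDvec p Ω cc A z1, tgDvec_mem p Ω cc hAz1⟩ := by
      apply Subtype.ext
      funext ω
      rw [hmval]
      show _ = tgDvec p Ω cc A z1 ω
      unfold tgDvec
      by_cases h1 : ω = A
      · have harg : s2⁻¹ ω = z1 := by
          rw [h1, hs2inv, Equiv.Perm.mul_apply, Equiv.swap_apply_left]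
          exact Equiv.swap_apply_of_ne_of_ne h12 h13
        rw [harg, huz1, inv_one, mul_one, h1, if_pos rfl]
        rw [hcc, ofAdd_toAdd]
      · by_cases h2 : ω = z1
        · have harg : s2⁻¹ ω = A := by
            rw [h2, hs2inv, Equiv.Perm.mul_apply, Equiv.swap_apply_right]
            exact Equiv.swap_apply_of_ne_of_ne (Ne.symm hz2.2.1) (Ne.symm hz3.2.1)
          rw [harg, h2, huz1, one_mul, if_neg hz1A, if_pos rfl]
          rw [hcc, ofAdd_neg, ofAdd_toAdd]
        · rw [if_neg h1, if_neg h2, ofAdd_zero]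
          by_cases h3 : ω = z2
          · have harg : s2⁻¹ ω = z3 := by
              rw [h3, hs2inv, Equiv.Perm.mul_apply,
                Equiv.swap_apply_of_ne_of_ne hz2.2.1 (Ne.symm h12), Equiv.swap_apply_left]
            rw [harg, h3, huz2, huz3, inv_one, mul_one]
          · by_cases h4 : ω = z3
            · have harg : s2⁻¹ ω = z2 := by
                rw [h4, hs2inv, Equiv.Perm.mul_apply,
                  Equiv.swap_apply_of_ne_of_ne hz3.2.1 (Ne.symm h13), Equiv.swap_apply_right]
              rw [harg, h4, huz2, huz3, inv_one, mul_one]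
            · have harg : s2⁻¹ ω = ω := by
                rw [hs2inv, Equiv.Perm.mul_apply,
                  Equiv.swap_apply_of_ne_of_ne h1 h2, Equiv.swap_apply_of_ne_of_ne h3 h4]
              rw [harg, mul_inv_cancel]
    -- every difference vector with coefficient cc lies in M
    have hdiffc : ∀ {al be : Ω} (hne : al ≠ be),
        (⟨tgDvec p Ω cc al be, tgDvec_mem p Ω cc hne⟩ : Wsub p Ω) ∈ M := by
      intro al be hne
      obtain ⟨sg, hsgalt, hsgA, hsgz⟩ := tg_exists_alt hdeg hAz1 hne
      have h1 : (altActW p Ω ⟨sg, hsgalt⟩) ⟨tgDvec p Ω cc A z1, tgDvec_mem p Ω cc hAz1⟩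
          = ⟨tgDvec p Ω cc al be, tgDvec_mem p Ω cc hne⟩ := by
        apply Subtype.ext
        rw [haltW]
        show ((WAut p Ω sg) ⟨tgDvec p Ω cc A z1, tgDvec_mem p Ω cc hAz1⟩
          : Ω → Multiplicative (ZMod p)) = _
        rw [tgWAut_dvec sg cc hAz1, hsgA, hsgz]
      rw [← h1]
      exact hMinv _ _ (hmdvec ▸ hmM)
    -- all difference vectors lie in M
    have hdiffall : ∀ (d : ZMod p) {al be : Ω} (hne : al ≠ be),
        (⟨tgDvec p Ω d al be, tgDvec_mem p Ω d hne⟩ : Wsub p Ω) ∈ M := by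
      intro d al be hne
      set n : ℕ := (d * cc⁻¹).val with hn
      have hnc : (n : ZMod p) * cc = d := by
        rw [hn, ZMod.natCast_val, ZMod.cast_id, mul_assoc, inv_mul_cancel₀ hcc0, mul_one]
      have hpow : (⟨tgDvec p Ω cc al be, tgDvec_mem p Ω cc hne⟩ : Wsub p Ω) ^ n
          = ⟨tgDvec p Ω d al be, tgDvec_mem p Ω d hne⟩ := by
        apply Subtype.ext
        rw [SubgroupClass.coe_pow]
        funext ω
        rw [Pi.pow_apply]
        show (Multiplicative.ofAdd _) ^ n = Multiplicative.ofAdd _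
        rw [← ofAdd_nsmul, nsmul_eq_mul]
        congr 1
        by_cases h1 : ω = al
        · rw [if_pos h1, if_pos h1, hnc]
        · by_cases h2 : ω = be
          · rw [if_neg h1, if_neg h1, if_pos h2, if_pos h2, mul_neg, hnc]
          · rw [if_neg h1, if_neg h1, if_neg h2, if_neg h2, mul_zero]
      rw [← hpow]
      exact M.pow_mem (hdiffc hne) n
    -- conclude : M is everything
    intro w
    obtain ⟨ω0⟩ : Nonempty Ω := Fintype.card_pos_iff.mp (by omega)
    set cf : Ω → ZMod p := fun ω => Multiplicative.toAdd ((w : Ω → Multiplicative (ZMod p)) ω)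
      with hcf
    have hsum : ∑ ω, cf ω = 0 := hWsum w
    set F : Ω → Wsub p Ω := fun ω =>
      if h : ω = ω0 then 1 else ⟨tgDvec p Ω (cf ω) ω ω0, tgDvec_mem p Ω (cf ω) h⟩ with hF
    have hFM : ∀ ω, F ω ∈ M := by
      intro ω
      simp only [hF]
      by_cases h : ω = ω0
      · rw [dif_pos h]; exact M.one_mem
      · rw [dif_neg h]; exact hdiffall (cf ω) h
    have hwF : w = ∏ ω, F ω := by
      apply Subtype.ext
      rw [SubmonoidClass.coe_finset_prod]
      funext ρ
      rw [Finset.prod_apply]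
      set Gf : Ω → ZMod p := fun ω =>
        if ω = ω0 then 0 else (if ρ = ω then cf ω else if ρ = ω0 then -(cf ω) else 0) with hGf
      have hfac : ∀ ω ∈ Finset.univ, ((F ω : Wsub p Ω) : Ω → Multiplicative (ZMod p)) ρ
          = Multiplicative.ofAdd (Gf ω) := by
        intro ω _
        simp only [hF, hGf]
        by_cases h : ω = ω0
        · rw [dif_pos h, if_pos h]
          rfl
        · rw [dif_neg h, if_neg h]
          rfl
      rw [Finset.prod_congr rfl hfac, ← ofAdd_sum]
      by_cases hρ : ρ = ω0
      · have hGf2 : ∀ ω ∈ Finset.univ, Gf ω = -(cf ω) + (if ω = ω0 then cf ω0 else 0) := by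
          intro ω _
          simp only [hGf]
          by_cases h : ω = ω0
          · rw [if_pos h, if_pos h, h, neg_add_cancel]
          · rw [if_neg h, if_neg h, if_neg (fun hc : ρ = ω => h (hc ▸ hρ)), if_pos hρ, add_zero]
        rw [Finset.sum_congr rfl hGf2, Finset.sum_add_distrib,
          Finset.sum_ite_eq' Finset.univ ω0 (fun _ => cf ω0)]
        rw [if_pos (Finset.mem_univ ω0), Finset.sum_neg_distrib, hsum, neg_zero, zero_add]
        rw [hρ, hcf, ofAdd_toAdd]
      · have hGf2 : ∀ ω ∈ Finset.univ, Gf ω = if ρ = ω then cf ρ else 0 := by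
          intro ω _
          simp only [hGf]
          by_cases h : ω = ω0
          · rw [if_pos h, if_neg (fun hc : ρ = ω => hρ (hc.trans h))]
          · rw [if_neg h, if_neg hρ]
            by_cases h2 : ρ = ω
            · rw [if_pos h2, if_pos h2, h2]
            · rw [if_neg h2, if_neg h2]
        rw [Finset.sum_congr rfl hGf2, Finset.sum_ite_eq Finset.univ ρ (fun _ => cf ρ)]
        rw [if_pos (Finset.mem_univ ρ), hcf, ofAdd_toAdd]
    rw [hwF]
    exact Subgroup.prod_mem M (fun ω _ => hFM ω)
  · exfalso
    push_neg at hMv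
    -- f factors through pi0
    have hfactor : ∀ g h : Tri p q r, pi0 g = pi0 h → f g = f h := by
      intro g h hgh
      have hr1 : (f (g * h⁻¹)).right = 1 := by
        rw [hcomp, map_mul, map_inv, hgh, mul_inv_cancel]
      have hin : SemidirectProduct.inl ((f (g * h⁻¹)).left) = f (g * h⁻¹) := by
        apply SemidirectProduct.ext
        · rfl
        · rw [hr1]; rfl
      have hmem : (f (g * h⁻¹)).left ∈ M := by
        show inl _ ∈ f.range
        rw [hin]
        exact ⟨g * h⁻¹, rfl⟩
      have h1 := hMv _ hmem
      have h2 : f (g * h⁻¹) = 1 := by rw [← hin, h1, map_one]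
      rw [map_mul, map_inv] at h2
      exact mul_inv_eq_one.mp h2
    -- the W-component function on the alternating group
    have hwfun : ∀ s : alternatingGroup Ω, ∃ wv : Wsub p Ω,
        ∀ g : Tri p q r, pi0 g = s → (f g).left = wv := by
      intro s
      obtain ⟨g0, hg0⟩ := hpi0surj s
      exact ⟨(f g0).left, fun g hg => by rw [hfactor g g0 (by rw [hg, hg0])]⟩
    choose wfun hwspec using hwfun
    have hwmul : ∀ s t : alternatingGroup Ω,
        wfun (s * t) = wfun s * (altActW p Ω s) (wfun t) := by
      intro s t
      obtain ⟨g1, hg1⟩ := hpi0surj s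
      obtain ⟨g2, hg2⟩ := hpi0surj t
      have h1 := hwspec s g1 hg1
      have h2 := hwspec t g2 hg2
      have h3 := hwspec (s * t) (g1 * g2) (by rw [map_mul, hg1, hg2])
      rw [← h3, map_mul, SemidirectProduct.mul_left, h1, h2, hcomp, hg1]
    have hw1 : wfun 1 = 1 := by
      have h := hwspec 1 1 (map_one pi0)
      rw [← h, map_one]
      rfl
    -- the alternating group on Ω minus the point a
    have hcardOa : 5 ≤ Fintype.card {x : Ω // x ≠ a} := by
      have h1 : Fintype.card {x : Ω // ¬ (x = a)}
          = Fintype.card Ω - Fintype.card {x : Ω // x = a} :=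
        Fintype.card_subtype_compl _
      have h2 : Fintype.card {x : Ω // x = a} = 1 := Fintype.card_subtype_eq a
      have h3 : Fintype.card {x : Ω // ¬ (x = a)} = Fintype.card {x : Ω // x ≠ a} := rfl
      omega
    set iota : Equiv.Perm {x : Ω // x ≠ a} →* Equiv.Perm Ω :=
      Equiv.Perm.extendDomainHom (Equiv.refl {x : Ω // x ≠ a}) with hiotadef
    have hiotafix : ∀ e : Equiv.Perm {x : Ω // x ≠ a}, (iota e) a = a := fun e =>
      Equiv.Perm.extendDomain_apply_not_subtype e (Equiv.refl _) (by simp)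
    have hiotasign : ∀ e : Equiv.Perm {x : Ω // x ≠ a},
        Equiv.Perm.sign (iota e) = Equiv.Perm.sign e := fun e =>
      Equiv.Perm.sign_extendDomain e (Equiv.refl _)
    have hiotamem : ∀ e : alternatingGroup {x : Ω // x ≠ a},
        iota (e : Equiv.Perm {x : Ω // x ≠ a}) ∈ alternatingGroup Ω := by
      intro e
      rw [Equiv.Perm.mem_alternatingGroup, hiotasign]
      exact Equiv.Perm.mem_alternatingGroup.mp e.2
    set gg : alternatingGroup {x : Ω // x ≠ a} → alternatingGroup Ω :=
      fun e => ⟨iota (e : Equiv.Perm {x : Ω // x ≠ a}), hiotamem e⟩ with hgg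
    have hggmul : ∀ e1 e2, gg (e1 * e2) = gg e1 * gg e2 := fun e1 e2 =>
      Subtype.ext (by
        show iota _ = iota _ * iota _
        rw [← map_mul]
        rfl)
    have hggfix : ∀ e, ((gg e : alternatingGroup Ω) : Equiv.Perm Ω) a = a := fun e => hiotafix _
    set chi : alternatingGroup {x : Ω // x ≠ a} → Multiplicative (ZMod p) :=
      fun e => ((wfun (gg e) : Wsub p Ω) : Ω → Multiplicative (ZMod p)) a with hchi
    have hchimul : ∀ e1 e2, chi (e1 * e2) = chi e1 * chi e2 := by
      intro e1 e2
      show ((wfun (gg (e1 * e2)) : Wsub p Ω) : Ω → Multiplicative (ZMod p)) a = _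
      rw [hggmul, hwmul]
      have hcm : ∀ (x y : Wsub p Ω),
          ((x * y : Wsub p Ω) : Ω → Multiplicative (ZMod p)) a
          = (x : Ω → Multiplicative (ZMod p)) a * (y : Ω → Multiplicative (ZMod p)) a :=
        fun x y => rfl
      rw [hcm, haltW, tgWAut_apply]
      have hsymm : ((gg e1 : alternatingGroup Ω) : Equiv.Perm Ω).symm a = a := by
        rw [Equiv.symm_apply_eq]
        exact (hggfix e1).symm
      rw [hsymm]
    have hchi1 : chi 1 = 1 := by
      show ((wfun (gg 1) : Wsub p Ω) : Ω → Multiplicative (ZMod p)) a = 1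
      have : gg 1 = 1 := Subtype.ext (by show iota 1 = 1; exact map_one iota)
      rw [this, hw1]
      rfl
    have hchiinv : ∀ e, chi e⁻¹ = (chi e)⁻¹ := by
      intro e
      have h := hchimul e e⁻¹
      rw [mul_inv_cancel, hchi1] at h
      exact (inv_eq_of_mul_eq_one_right h.symm).symm
    have hchi3 : ∀ s : alternatingGroup {x : Ω // x ≠ a},
        Equiv.Perm.IsThreeCycle (s : Equiv.Perm {x : Ω // x ≠ a}) → chi s = 1 := by
      intro s hs
      have hsq : Equiv.Perm.IsThreeCycle ((s * s : alternatingGroup {x : Ω // x ≠ a})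
          : Equiv.Perm {x : Ω // x ≠ a}) := hs.isThreeCycle_sq
      have hconj := alternatingGroup.isThreeCycle_isConj (by rwa [Nat.card_eq_fintype_card]) hs hsq
      obtain ⟨cj, hcj⟩ := isConj_iff.mp hconj
      have h1 := congrArg chi hcj
      rw [hchimul, hchimul, hchiinv, hchimul] at h1
      have h2 : chi s = chi s * chi s := by
        rw [← h1, mul_comm (chi cj) (chi s), mul_assoc, mul_inv_cancel, mul_one]
      exact (left_eq_mul.mp h2)
    have hchiall : ∀ s : alternatingGroup {x : Ω // x ≠ a}, chi s = 1 := by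
      intro s
      have hmem : (s : Equiv.Perm {x : Ω // x ≠ a}) ∈ Subgroup.closure
          {σ : Equiv.Perm {x : Ω // x ≠ a} | σ.IsThreeCycle} := by
        rw [Equiv.Perm.closure_three_cycles_eq_alternating]
        exact s.2
      exact Subgroup.closure_induction
        (p := fun x _ => ∀ (hm : x ∈ alternatingGroup {x : Ω // x ≠ a}), chi ⟨x, hm⟩ = 1)
        (fun x hx hm => hchi3 ⟨x, hm⟩ (show Equiv.Perm.IsThreeCycle x from hx))
        (fun hm => by
          have h : (⟨1, hm⟩ : alternatingGroup {x : Ω // x ≠ a}) = 1 := Subtype.ext rfl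
          rw [h, hchi1])
        (fun x y hx hy px py hm => by
          have hxm : x ∈ alternatingGroup {x : Ω // x ≠ a} := by
            rw [← Equiv.Perm.closure_three_cycles_eq_alternating]; exact hx
          have hym : y ∈ alternatingGroup {x : Ω // x ≠ a} := by
            rw [← Equiv.Perm.closure_three_cycles_eq_alternating]; exact hy
          have h : (⟨x * y, hm⟩ : alternatingGroup {x : Ω // x ≠ a})
              = ⟨x, hxm⟩ * ⟨y, hym⟩ := Subtype.ext rfl
          rw [h, hchimul, px hxm, py hym, one_mul])
        (fun x hx px hm => by
          have hxm : x ∈ alternatingGroup {x : Ω // x ≠ a} := by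
            rw [← Equiv.Perm.closure_three_cycles_eq_alternating]; exact hx
          have h : (⟨x⁻¹, hm⟩ : alternatingGroup {x : Ω // x ≠ a})
              = (⟨x, hxm⟩)⁻¹ := Subtype.ext rfl
          rw [h, hchiinv, px hxm, inv_one])
        hmem s.2
    -- the element of the small alternating group coming from xh
    have hpred : ∀ u : Ω, u ≠ a ↔ xh u ≠ a := by
      intro u
      constructor
      · intro h hc
        exact h (xh.injective (hc.trans hax.symm))
      · intro h hc
        rw [hc, hax] at h
        exact h rfl
    set ex : Equiv.Perm {x : Ω // x ≠ a} := xh.subtypePerm (fun u => (hpred u).symm) with hex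
    have hiotax : iota ex = xh := by
      ext u
      by_cases hu : u = a
      · rw [hu]
        rw [hiotafix, hax]
      · show ex.extendDomain (Equiv.refl {x : Ω // x ≠ a}) u = xh u
        rw [Equiv.Perm.extendDomain_apply_subtype ex (Equiv.refl _) (show u ≠ a from hu)]
        rfl
    have hexmem : ex ∈ alternatingGroup {x : Ω // x ≠ a} := by
      rw [Equiv.Perm.mem_alternatingGroup, ← hiotasign ex, hiotax]
      exact Equiv.Perm.mem_alternatingGroup.mp (hmemrange (gx p q r))
    have hggx : gg ⟨ex, hexmem⟩ = pi0 (gx p q r) := Subtype.ext (by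
      show iota ex = π (gx p q r)
      rw [hiotax])
    have hval : chi ⟨ex, hexmem⟩ = Multiplicative.ofAdd (1 : ZMod p) := by
      show ((wfun (gg ⟨ex, hexmem⟩) : Wsub p Ω) : Ω → Multiplicative (ZMod p)) a = _
      rw [hggx, ← hwspec (pi0 (gx p q r)) (gx p q r) rfl, hf0]
      show tgDvec p Ω 1 a b a = _
      unfold tgDvec
      rw [if_pos rfl]
    have hzero := hchiall ⟨ex, hexmem⟩
    rw [hval] at hzero
    have h10 : (1 : ZMod p) = 0 := by
      have h := congrArg Multiplicative.toAdd hzero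
      simpa using h
    exact one_ne_zero h10
end

section
/- Let p, q, r be positive integers with p prime. If there exists a surjective group homomorphism from the triangle group Δ(p,q,r) onto the cyclic group ℤ/pℤ, then p divides qr. -/
open Equiv

lemma tri_rel_one {p q r : ℕ} {w : FreeGroup (Fin 2)} (hw : w ∈ triRels p q r) :
    (QuotientGroup.mk w : Tri p q r) = 1 :=
  (QuotientGroup.eq_one_iff w).mpr (Subgroup.subset_normalClosure hw)

lemma gy_pow {p q r : ℕ} : (gy p q r) ^ q = 1 := by
  have : (gy p q r) ^ q = (QuotientGroup.mk (FreeGroup.of 1 ^ q) : Tri p q r) := rfl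
  rw [this]
  exact tri_rel_one (by simp [triRels])

lemma gxy_pow {p q r : ℕ} : (gx p q r * gy p q r) ^ r = 1 := by
  have : (gx p q r * gy p q r) ^ r
      = (QuotientGroup.mk ((FreeGroup.of 0 * FreeGroup.of 1) ^ r) : Tri p q r) := rfl
  rw [this]
  exact tri_rel_one (by simp [triRels])

theorem surj_onto_cyclic_imp_dvd
    (p q r : ℕ) (hp : p.Prime) (hq : 0 < q) (hr : 0 < r)
    (hsurj : ∃ f : Tri p q r →* Multiplicative (ZMod p), Function.Surjective f) :
    p ∣ q * r := by
  haveI := Fact.mk hp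
  by_contra h
  have hpq : ¬ (p : ℕ) ∣ q := fun hd => h (hd.mul_right r)
  have hpr : ¬ (p : ℕ) ∣ r := fun hd => h (hd.mul_left q)
  obtain ⟨f, hf⟩ := hsurj
  have hqz : (q : ZMod p) ≠ 0 := by
    rw [Ne, ZMod.natCast_eq_zero_iff]; exact hpq
  have hrz : (r : ZMod p) ≠ 0 := by
    rw [Ne, ZMod.natCast_eq_zero_iff]; exact hpr
  -- f (gy) = 1
  have hb : f (gy p q r) = 1 := by
    have h1 : (f (gy p q r)) ^ q = 1 := by
      rw [← map_pow, gy_pow, map_one]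
    have h2 : (q : ZMod p) * Multiplicative.toAdd (f (gy p q r)) = 0 := by
      have := congrArg Multiplicative.toAdd h1
      rwa [toAdd_pow, nsmul_eq_mul, toAdd_one] at this
    have := (mul_eq_zero.mp h2).resolve_left hqz
    have : f (gy p q r) = Multiplicative.ofAdd 0 := by
      rw [← this]; rfl
    simpa using this
  have ha : f (gx p q r) = 1 := by
    have h1 : (f (gx p q r) * f (gy p q r)) ^ r = 1 := by
      rw [← map_mul, ← map_pow, gxy_pow, map_one]
    rw [hb, mul_one] at h1
    have h2 : (r : ZMod p) * Multiplicative.toAdd (f (gx p q r)) = 0 := by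
      have := congrArg Multiplicative.toAdd h1
      rwa [toAdd_pow, nsmul_eq_mul, toAdd_one] at this
    have := (mul_eq_zero.mp h2).resolve_left hrz
    have : f (gx p q r) = Multiplicative.ofAdd 0 := by
      rw [← this]; rfl
    simpa using this
  -- every generator maps to 1, so f is trivial
  have htriv : ∀ g : Tri p q r, f g = 1 := by
    intro g
    induction g using QuotientGroup.induction_on with
    | H w =>
      induction w using FreeGroup.induction_on with
      | C1 => exact map_one f
      | of i =>
        fin_cases i
        · exact ha
        · exact hb
      | inv_of i hi =>
        exact (map_inv f (QuotientGroup.mk (FreeGroup.of i) : Tri p q r)).trans ((congrArg (·⁻¹) hi).trans inv_one)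
      | mul x y hx hy =>
        exact (map_mul f (QuotientGroup.mk x : Tri p q r) (QuotientGroup.mk y)).trans ((congrArg₂ (· * ·) hx hy).trans (mul_one 1))
  obtain ⟨g, hg⟩ := hf (Multiplicative.ofAdd (1 : ZMod p))
  rw [htriv g] at hg
  have : (1 : ZMod p) = 0 := by
    have := congrArg Multiplicative.toAdd hg
    simpa using this.symm
  exact one_ne_zero this
end
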